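/- With 𝔤 = 𝔰𝔩(2,ℝ) × 𝔰𝔬(3) and e₁ = (2/3)X+(2/3)Y+(4/3)B, e₂ = (2/3)H+(4/3)A, e₃ = (−1/√2)X+(1/√2)Y+(2/√2)C, e₆ = (1/2)(X−Y)+C as above, the following bracket relations hold: [e₁,e₂] = −(8√2/9)e₃, [e₁,e₆] = e₂, [e₂,e₆] = −e₁, [e₄,e₆] = −e₅, [e₅,e₆] = e₄, where e₄ = H−2A and e₅ = X+Y−2B. -/
import Mathlib


noncomputable section

theorem stmt8 (L : Type*) [LieRing L] [LieAlgebra ℝ L]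
    (H X Y A B C : L)
    (hHX : ⁅H, X⁆ = (-2 : ℝ) • X) (hHY : ⁅H, Y⁆ = (2 : ℝ) • Y) (hXY : ⁅X, Y⁆ = -H)
    (hAB : ⁅A, B⁆ = C) (hBC : ⁅B, C⁆ = A) (hCA : ⁅C, A⁆ = B)
    (hHA : ⁅H, A⁆ = 0) (hHB : ⁅H, B⁆ = 0) (hHC : ⁅H, C⁆ = 0)
    (hXA : ⁅X, A⁆ = 0) (hXB : ⁅X, B⁆ = 0) (hXC : ⁅X, C⁆ = 0)
    (hYA : ⁅Y, A⁆ = 0) (hYB : ⁅Y, B⁆ = 0) (hYC : ⁅Y, C⁆ = 0) :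
    let e1 := (2/3 : ℝ) • X + (2/3 : ℝ) • Y + (4/3 : ℝ) • B
    let e2 := (2/3 : ℝ) • H + (4/3 : ℝ) • A
    let e3 := (-(1 / Real.sqrt 2)) • X + (1 / Real.sqrt 2) • Y + (2 / Real.sqrt 2) • C
    let e4 := H - (2 : ℝ) • A
    let e5 := X + Y - (2 : ℝ) • B
    let e6 := (1/2 : ℝ) • (X - Y) + C
    ⁅e1, e2⁆ = (-(8 * Real.sqrt 2 / 9)) • e3 ∧
    ⁅e1, e6⁆ = e2 ∧
    ⁅e2, e6⁆ = -e1 ∧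
    ⁅e4, e6⁆ = -e5 ∧
    ⁅e5, e6⁆ = e4 := by
  have hXH : ⁅X, H⁆ = (2 : ℝ) • X := by
    rw [← lie_skew, hHX]; module
  have hYH : ⁅Y, H⁆ = (-2 : ℝ) • Y := by
    rw [← lie_skew, hHY]; module
  have hYX : ⁅Y, X⁆ = H := by rw [← lie_skew, hXY]; simp
  have hBA : ⁅B, A⁆ = -C := by rw [← lie_skew, hAB]
  have hCB : ⁅C, B⁆ = -A := by rw [← lie_skew, hBC]
  have hAC : ⁅A, C⁆ = -B := by rw [← lie_skew, hCA]
  have hAH : ⁅A, H⁆ = 0 := by rw [← lie_skew, hHA, neg_zero]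
  have hBH : ⁅B, H⁆ = 0 := by rw [← lie_skew, hHB, neg_zero]
  have hCH : ⁅C, H⁆ = 0 := by rw [← lie_skew, hHC, neg_zero]
  have hAX : ⁅A, X⁆ = 0 := by rw [← lie_skew, hXA, neg_zero]
  have hBX : ⁅B, X⁆ = 0 := by rw [← lie_skew, hXB, neg_zero]
  have hCX : ⁅C, X⁆ = 0 := by rw [← lie_skew, hXC, neg_zero]
  have hAY : ⁅A, Y⁆ = 0 := by rw [← lie_skew, hYA, neg_zero]
  have hBY : ⁅B, Y⁆ = 0 := by rw [← lie_skew, hYB, neg_zero]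
  have hCY : ⁅C, Y⁆ = 0 := by rw [← lie_skew, hYC, neg_zero]
  have hs : Real.sqrt 2 * (1 / Real.sqrt 2) = 1 := by
    rw [mul_one_div, div_self (by positivity : Real.sqrt 2 ≠ 0)]
  intro e1 e2 e3 e4 e5 e6
  refine ⟨?_, ?_, ?_, ?_, ?_⟩ <;>
  · simp only [e1, e2, e3, e4, e5, e6, lie_add, add_lie, lie_sub, sub_lie,
      lie_smul, smul_lie, lie_self, hHX, hHY, hXY, hAB, hBC, hCA, hHA, hHB, hHC,
      hXA, hXB, hXC, hYA, hYB, hYC, hXH, hYH, hYX, hBA, hCB, hAC, hAH, hBH, hCH,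
      hAX, hBX, hCX, hAY, hBY, hCY, smul_smul, smul_neg, smul_zero, neg_smul,
      neg_neg, add_zero, zero_add, neg_zero]
    try module
    try (match_scalars <;> field_simp <;>
      first
        | ring1
        | linear_combination (-72 : ℝ) * Real.sq_sqrt (show (0:ℝ) ≤ 2 by norm_num))
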